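/- Let V be a word with k distinct letters, each occurring at least r times in V for a positive integer r. Let Σ be a finite alphabet with q ≥ 2 letters and W_n ∈ Σ^n chosen uniformly at random. Then for any nondecreasing function f with f(n) > 0 and for sufficiently large n, P(C(n+1, 2) · δ(V,W_n) > n·f(n)) < n^{k+3} · q^{f(n)(1−r)/r}. -/

import Mathlib

open Filter Asymptotics

/-- The substring `W[i,j]` of `W`: the `j - i` consecutive letters of `W`
beginning with the `(i+1)`-th. -/
def subword {β : Type*} (W : List β) (i j : ℕ) : List β :=
  (W.drop i).take (j - i)

/-- `W` is an instance of `V` provided `W = φ(V)` for some nonerasing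
homomorphism `φ`, i.e. a map on letters (no letter mapping to the empty word)
extended by concatenation. -/
def IsInstance {α β : Type*} (V : List α) (W : List β) : Prop :=
  ∃ φ : α → List β, (∀ a, φ a ≠ []) ∧ W = (V.map φ).flatten

/-- A word is doubled provided every letter occurring in it occurs at least twice. -/
def Doubled {α : Type*} [DecidableEq α] (V : List α) : Prop :=
  ∀ a ∈ V, 2 ≤ V.count a

open Classical in
/-- `density V W` is the proportion of the `C(|W|+1, 2)` substrings of `W`
(indexed by pairs `(i,j)` with `0 ≤ i < j ≤ |W|`) that are instances of `V`. -/
noncomputable def density {α β : Type*} (V : List α) (W : List β) : ℝ :=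
  (((Finset.range (W.length + 1) ×ˢ Finset.range (W.length + 1)).filter
      (fun p => p.1 < p.2 ∧ IsInstance V (subword W p.1 p.2))).card : ℝ) /
    (Nat.choose (W.length + 1) 2)

/-- The expected density of `V` in a word of length `n` chosen uniformly at
random over the alphabet `σ` (words of length `n` being encoded as `Fin n → σ`). -/
noncomputable def expDensity {α : Type*} (V : List α) (σ : Type*) [Fintype σ] (n : ℕ) : ℝ :=
  (∑ w : Fin n → σ, density V (List.ofFn w)) / (Fintype.card σ : ℝ) ^ n

/-- `homCount V W` counts the encounters of `V` in `W`: triples `(a, b, φ)`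
where `φ` is a nonerasing homomorphism from the letters of `V` with
`W[a,b] = φ(V)`. -/
noncomputable def homCount {α σ : Type*} (V : List α) (W : List σ) : ℕ :=
  Set.ncard {t : ℕ × ℕ × ({a : α // a ∈ V} → List σ) |
    t.1 < t.2.1 ∧ t.2.1 ≤ W.length ∧ (∀ a, t.2.2 a ≠ []) ∧
    subword W t.1 t.2.1 = (V.attach.map t.2.2).flatten}

/-- Expected number of encounters of `V` in a uniformly random word of length `n`. -/
noncomputable def expHom {α : Type*} (V : List α) (σ : Type*) [Fintype σ] (n : ℕ) : ℝ :=
  (∑ w : Fin n → σ, (homCount V (List.ofFn w) : ℝ)) / (Fintype.card σ : ℝ) ^ n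

/-- `instProb V σ m` is the proportion of words in `σ^m` that are instances of `V`. -/
noncomputable def instProb {α : Type*} (V : List α) (σ : Type*) [Fintype σ] (m : ℕ) : ℝ :=
  (Nat.card {w : Fin m → σ // IsInstance V (List.ofFn w)} : ℝ) / (Fintype.card σ : ℝ) ^ m

/-- The variance of the density of `V` in a uniformly random word of length `n`. -/
noncomputable def varDensity {α : Type*} (V : List α) (σ : Type*) [Fintype σ] (n : ℕ) : ℝ :=
  (∑ w : Fin n → σ, (density V (List.ofFn w) - expDensity V σ n) ^ 2) /
    (Fintype.card σ : ℝ) ^ n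

set_option maxHeartbeats 1000000
set_option synthInstance.maxHeartbeats 400000
section AuxStmt15

lemma subword_ofFn {σ : Type*} {n : ℕ} (w : Fin n → σ) {i j : ℕ} (hj : j ≤ n) (hij : i ≤ j) :
    subword (List.ofFn w) i j = List.ofFn (fun t : Fin (j - i) => w ⟨i + t, by omega⟩) := by
  apply List.ext_getElem
  · simp [subword]; omega
  · intro t h1 h2
    simp [subword, List.getElem_take, List.getElem_drop, List.getElem_ofFn]

lemma flatten_pieces {α σ : Type*} : ∀ (L : List α) (φ₁ φ₂ : α → List σ),
    (∀ a ∈ L, (φ₁ a).length = (φ₂ a).length) →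
    (L.map φ₁).flatten = (L.map φ₂).flatten →
    ∀ a ∈ L, φ₁ a = φ₂ a := by
  intro L
  induction L with
  | nil => simp
  | cons b L ih =>
    intro φ₁ φ₂ hlen h a ha
    simp only [List.map_cons, List.flatten_cons] at h
    obtain ⟨h1, h2⟩ := List.append_inj h (hlen b (by simp))
    rcases List.mem_cons.1 ha with rfl | ha'
    · exact h1
    · exact ih φ₁ φ₂ (fun x hx => hlen x (by simp [hx])) h2 a ha'

lemma instCount_le {α σ : Type*} [DecidableEq α] [Fintype σ] (V : List α) (r : ℕ)
    (hrpos : 0 < r) (hr : ∀ a ∈ V, r ≤ V.count a) (c : σ) (m : ℕ) :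
    Nat.card {u : Fin m → σ // IsInstance V (List.ofFn u)} ≤
      (m + 1) ^ V.toFinset.card * Fintype.card σ ^ (m / r) := by
  classical
  -- choose homomorphisms
  set T := {u : Fin m → σ // IsInstance V (List.ofFn u)}
  have key : ∀ u : T, ∃ φ : α → List σ, (∀ a, φ a ≠ []) ∧
      List.ofFn u.1 = (V.map φ).flatten := fun u => u.2
  choose φ hφ1 hφ2 using key
  -- basic length facts
  have hsum : ∀ u : T, (V.map (fun a => (φ u a).length)).sum = m := by
    intro u
    have := congrArg List.length (hφ2 u)
    simpa [List.length_flatten, Function.comp_def] using this.symm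
  have hlenle : ∀ u : T, ∀ a ∈ V, (φ u a).length ≤ m := by
    intro u a ha
    rw [← hsum u]
    exact List.single_le_sum (fun x _ => Nat.zero_le x) _ (List.mem_map_of_mem (f := fun a => (φ u a).length) ha)
  have hsval : ∀ u : T, ((V.dedup.map (φ u)).flatten).length
      = ∑ a ∈ V.toFinset, (φ u a).length := by
    intro u
    rw [List.length_flatten]
    simp only [List.map_map]
    rw [← List.sum_toFinset _ V.nodup_dedup]
    congr 1
    ext a
    simp [List.mem_dedup]
  have hsle : ∀ u : T, ((V.dedup.map (φ u)).flatten).length ≤ m / r := by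
    intro u
    rw [Nat.le_div_iff_mul_le hrpos, hsval u]
    calc (∑ a ∈ V.toFinset, (φ u a).length) * r
        = ∑ a ∈ V.toFinset, r * (φ u a).length := by
          rw [Finset.sum_mul]; exact Finset.sum_congr rfl (fun a _ => Nat.mul_comm _ _)
      _ ≤ ∑ a ∈ V.toFinset, V.count a * (φ u a).length := by
          refine Finset.sum_le_sum (fun a ha => ?_)
          exact Nat.mul_le_mul_right _ (hr a (List.mem_toFinset.1 ha))
      _ = (V.map (fun a => (φ u a).length)).sum := by
          rw [Finset.sum_list_map_count]
          simp [smul_eq_mul]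
      _ = m := hsum u
  -- the injection
  set F : T → ({a // a ∈ V.toFinset} → Fin (m + 1)) × (Fin (m / r) → σ) :=
    fun u => (fun a => ⟨(φ u a.1).length, by
        have := hlenle u a.1 (List.mem_toFinset.1 a.2); omega⟩,
      fun t => ((V.dedup.map (φ u)).flatten).getD t c) with hF
  have hinj : Function.Injective F := by
    intro u₁ u₂ h
    rw [Prod.ext_iff] at h
    obtain ⟨h1, h2⟩ := h
    have hlen : ∀ a ∈ V, (φ u₁ a).length = (φ u₂ a).length := by
      intro a ha
      have := congrFun h1 ⟨a, List.mem_toFinset.2 ha⟩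
      simpa [hF] using congrArg Fin.val this
    have hlend : ∀ a ∈ V.dedup, (φ u₁ a).length = (φ u₂ a).length :=
      fun a ha => hlen a (List.mem_dedup.1 ha)
    have hslen : ((V.dedup.map (φ u₁)).flatten).length
        = ((V.dedup.map (φ u₂)).flatten).length := by
      simp only [List.length_flatten, List.map_map]
      exact congrArg List.sum (List.map_congr_left (fun a ha => hlend a ha))
    have hJ : (V.dedup.map (φ u₁)).flatten = (V.dedup.map (φ u₂)).flatten := by
      apply List.ext_getElem hslen
      intro t ht1 ht2
      have htlt : t < m / r := lt_of_lt_of_le ht1 (hsle u₁)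
      have := congrFun h2 ⟨t, htlt⟩
      simp only [hF] at this
      rwa [List.getD_eq_getElem _ _ ht1, List.getD_eq_getElem _ _ ht2] at this
    have hpieces := flatten_pieces V.dedup (φ u₁) (φ u₂) hlend hJ
    have hofn : List.ofFn u₁.1 = List.ofFn u₂.1 := by
      rw [hφ2 u₁, hφ2 u₂]
      congr 1
      exact List.map_congr_left (fun a ha => hpieces a (List.mem_dedup.2 ha))
    exact Subtype.ext (List.ofFn_injective hofn)
  haveI : Nonempty σ := ⟨c⟩
  calc Nat.card T ≤ Nat.card (({a // a ∈ V.toFinset} → Fin (m + 1)) × (Fin (m / r) → σ)) :=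
        Nat.card_le_card_of_injective F hinj
    _ = (m + 1) ^ V.toFinset.card * Fintype.card σ ^ (m / r) := by
        rw [Nat.card_eq_fintype_card, Fintype.card_prod, Fintype.card_fun, Fintype.card_fun,
          Fintype.card_coe, Fintype.card_fin, Fintype.card_fin]

lemma pair_count_le {α σ : Type*} [Fintype σ] (V : List α) {n i j : ℕ} (hij : i < j)
    (hjn : j ≤ n) :
    Nat.card {w : Fin n → σ // IsInstance V (subword (List.ofFn w) i j)} ≤
      Nat.card {u : Fin (j - i) → σ // IsInstance V (List.ofFn u)} *
        Fintype.card σ ^ (i + (n - j)) := by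
  classical
  set G : {w : Fin n → σ // IsInstance V (subword (List.ofFn w) i j)} →
      {u : Fin (j - i) → σ // IsInstance V (List.ofFn u)} × (Fin i → σ) × (Fin (n - j) → σ) :=
    fun w => (⟨fun t => w.1 ⟨i + t, by omega⟩, by
        have := w.2
        rwa [subword_ofFn w.1 hjn hij.le] at this⟩,
      fun t => w.1 ⟨t, by omega⟩, fun t => w.1 ⟨j + t, by omega⟩) with hG
  have hinj : Function.Injective G := by
    intro w₁ w₂ h
    rw [Prod.ext_iff, Prod.ext_iff, Subtype.ext_iff] at h
    obtain ⟨h1, h2, h3⟩ := h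
    apply Subtype.ext
    funext x
    rcases lt_or_ge x.1 i with hx | hx
    · have := congrFun h2 ⟨x.1, hx⟩
      simpa [hG] using this
    · rcases lt_or_ge x.1 j with hx2 | hx2
      · have := congrFun h1 ⟨x.1 - i, by omega⟩
        simp only [hG] at this
        convert this using 3 <;> · congr 1; omega
      · have := congrFun h3 ⟨x.1 - j, by omega⟩
        simp only [hG] at this
        convert this using 3 <;> · congr 1; omega
  calc Nat.card {w : Fin n → σ // IsInstance V (subword (List.ofFn w) i j)}
      ≤ Nat.card ({u : Fin (j - i) → σ // IsInstance V (List.ofFn u)} ×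
          (Fin i → σ) × (Fin (n - j) → σ)) := Nat.card_le_card_of_injective G hinj
    _ = Nat.card {u : Fin (j - i) → σ // IsInstance V (List.ofFn u)} *
        Fintype.card σ ^ (i + (n - j)) := by
        simp [Nat.card_prod, Nat.card_eq_fintype_card, Fintype.card_fun, pow_add, mul_assoc]

open Classical in
lemma exists_long {α β : Type*} {n : ℕ} (V : List α) (W : List β) (hW : W.length = n)
    (hn : 1 ≤ n) {x : ℝ} (hx : 0 < x)
    (h : (n : ℝ) * x < (Nat.choose (n + 1) 2 : ℝ) * density V W) :
    ∃ p : ℕ × ℕ, p.1 < p.2 ∧ p.2 ≤ n ∧ x ≤ ((p.2 - p.1 : ℕ) : ℝ) ∧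
      IsInstance V (subword W p.1 p.2) := by
  subst hW
  set n := W.length
  by_contra hcon
  push_neg at hcon
  set T := (Finset.range (n + 1) ×ˢ Finset.range (n + 1)).filter
      (fun p => p.1 < p.2 ∧ IsInstance V (subword W p.1 p.2)) with hT
  have hchoose : (0 : ℝ) < (Nat.choose (n + 1) 2 : ℝ) := by
    have : 0 < Nat.choose (n + 1) 2 := Nat.choose_pos (by omega)
    exact_mod_cast this
  have hcard : (n : ℝ) * x < (T.card : ℝ) := by
    have heq : (Nat.choose (n + 1) 2 : ℝ) * density V W = T.card := by
      rw [density, mul_div_cancel₀ _ (ne_of_gt hchoose)]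
    rwa [heq] at h
  have hsub : T.card ≤ (Finset.range n ×ˢ Finset.Icc 1 (Nat.floor x)).card := by
    apply Finset.card_le_card_of_injOn (fun p => (p.1, p.2 - p.1))
    · intro p hp
      rw [hT, Finset.mem_coe, Finset.mem_filter, Finset.mem_product,
        Finset.mem_range, Finset.mem_range] at hp
      obtain ⟨⟨hp1, hp2⟩, hp3, hp4⟩ := hp
      have hjn : p.2 ≤ n := by omega
      have hlt : ((p.2 - p.1 : ℕ) : ℝ) < x :=
        not_le.1 (fun hge => hcon p hp3 hjn hge hp4)
      rw [Finset.mem_coe, Finset.mem_product, Finset.mem_range, Finset.mem_Icc]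
      dsimp only
      exact ⟨by omega, by omega, Nat.le_floor hlt.le⟩
    · intro p hp q hq hpq
      simp only [hT, Finset.mem_coe, Finset.mem_filter] at hp hq
      simp only [] at hpq
      simp only [Prod.mk.injEq] at hpq
      obtain ⟨h1, h2⟩ := hpq
      have := hp.2.1; have := hq.2.1
      exact Prod.ext h1 (by omega)
  have hfloor : ((Nat.floor x : ℕ) : ℝ) ≤ x := Nat.floor_le hx.le
  have : (T.card : ℝ) ≤ (n : ℝ) * x := by
    calc (T.card : ℝ) ≤ ((n * Nat.floor x : ℕ) : ℝ) := by
          exact_mod_cast hsub.trans (le_of_eq (by simp [Finset.card_product]))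
      _ ≤ (n : ℝ) * x := by
          push_cast
          exact mul_le_mul_of_nonneg_left hfloor (by positivity)
  linarith

end AuxStmt15

/-- Let `V` have `k` distinct letters, each occurring at least `r ≥ 1` times,
and let `|Σ| = q ≥ 2`. Then for any nondecreasing positive `f` and sufficiently
large `n`, `P(C(n+1,2) δ(V,W_n) > n f(n)) < n^{k+3} q^{f(n)(1-r)/r}`. -/
theorem stmt15 {α σ : Type*} [DecidableEq α] [Fintype σ] (V : List α) (k r : ℕ)
    (hrpos : 0 < r) (hk : k = V.toFinset.card) (hr : ∀ a ∈ V, r ≤ V.count a)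
    (hq : 2 ≤ Fintype.card σ) (f : ℕ → ℝ) (hf : Monotone f) (hfpos : ∀ n, 0 < f n) :
    ∃ N : ℕ, ∀ n : ℕ, N ≤ n →
      (Nat.card {w : Fin n → σ //
          (n : ℝ) * f n < (Nat.choose (n + 1) 2 : ℝ) * density V (List.ofFn w)} : ℝ) /
        (Fintype.card σ : ℝ) ^ n <
      (n : ℝ) ^ (k + 3) * (Fintype.card σ : ℝ) ^ (f n * (1 - (r : ℝ)) / r) := by
  classical
  obtain ⟨c⟩ : Nonempty σ := Fintype.card_pos_iff.mp (by omega)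
  set q := Fintype.card σ with hqdef
  refine ⟨2 ^ (k + 2) + 2, fun n hn => ?_⟩
  have hn1 : 1 ≤ n := by have := Nat.one_le_two_pow (n := k + 2); omega
  have hn2 : 2 ^ (k + 2) < n := by omega
  have hq1 : (1 : ℝ) < (q : ℝ) := by exact_mod_cast (by omega : 1 < q)
  have hq0 : (0 : ℝ) < (q : ℝ) := by linarith
  have hqn : (0 : ℝ) < (q : ℝ) ^ n := by positivity
  have hrpow : (0 : ℝ) < (q : ℝ) ^ (f n * (1 - (r : ℝ)) / r) := Real.rpow_pos_of_pos hq0 _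
  set e : ℝ := (q : ℝ) ^ (f n * (1 - (r : ℝ)) / r) with he
  -- the event as a Finset
  set Q := Finset.univ.filter (fun w : Fin n → σ =>
    (n : ℝ) * f n < (Nat.choose (n + 1) 2 : ℝ) * density V (List.ofFn w)) with hQ
  have hNatQ : (Nat.card {w : Fin n → σ //
      (n : ℝ) * f n < (Nat.choose (n + 1) 2 : ℝ) * density V (List.ofFn w)} : ℕ) = Q.card := by
    rw [Nat.card_eq_fintype_card, Fintype.card_subtype]
  -- the index set of pairs
  set P := (Finset.range (n + 1) ×ˢ Finset.range (n + 1)).filter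
    (fun p : ℕ × ℕ => p.1 < p.2 ∧ f n ≤ ((p.2 - p.1 : ℕ) : ℝ)) with hP
  -- union bound
  have hQsub : Q ⊆ P.biUnion (fun p => Finset.univ.filter
      (fun w : Fin n → σ => IsInstance V (subword (List.ofFn w) p.1 p.2))) := by
    intro w hw
    rw [hQ, Finset.mem_filter] at hw
    obtain ⟨p, hp1, hp2, hp3, hp4⟩ := exists_long V (List.ofFn w)
      List.length_ofFn hn1 (hfpos n) hw.2
    rw [Finset.mem_biUnion]
    refine ⟨p, ?_, ?_⟩
    · rw [hP, Finset.mem_filter, Finset.mem_product, Finset.mem_range, Finset.mem_range]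
      exact ⟨⟨by omega, by omega⟩, hp1, hp3⟩
    · simp [hp4]
  have hQle : Q.card ≤ ∑ p ∈ P, (Finset.univ.filter
      (fun w : Fin n → σ => IsInstance V (subword (List.ofFn w) p.1 p.2))).card :=
    (Finset.card_le_card hQsub).trans (Finset.card_biUnion_le)
  -- per-pair bound, in ℝ
  have hpair : ∀ p ∈ P, ((Finset.univ.filter
      (fun w : Fin n → σ => IsInstance V (subword (List.ofFn w) p.1 p.2))).card : ℝ) ≤
      ((n : ℝ) + 1) ^ k * e * (q : ℝ) ^ n := by
    rintro ⟨i, j⟩ hp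
    rw [hP, Finset.mem_filter, Finset.mem_product, Finset.mem_range, Finset.mem_range] at hp
    obtain ⟨⟨hi, hj⟩, hij, hfm⟩ := hp
    have hjn : j ≤ n := by omega
    set m := j - i with hm
    have hm1 : 1 ≤ m := by omega
    have hmn : m ≤ n := by omega
    have hcard : (Finset.univ.filter
        (fun w : Fin n → σ => IsInstance V (subword (List.ofFn w) i j))).card ≤
        (m + 1) ^ k * q ^ (m / r) * q ^ (i + (n - j)) := by
      rw [← Fintype.card_subtype, ← Nat.card_eq_fintype_card]
      calc Nat.card {w : Fin n → σ // IsInstance V (subword (List.ofFn w) i j)}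
          ≤ Nat.card {u : Fin m → σ // IsInstance V (List.ofFn u)} * q ^ (i + (n - j)) :=
            pair_count_le V hij hjn
        _ ≤ (m + 1) ^ k * q ^ (m / r) * q ^ (i + (n - j)) := by
            rw [hk]
            exact Nat.mul_le_mul_right _ (instCount_le V r hrpos hr c m)
    calc ((Finset.univ.filter
        (fun w : Fin n → σ => IsInstance V (subword (List.ofFn w) i j))).card : ℝ)
        ≤ ((m + 1) ^ k * q ^ (m / r) * q ^ (i + (n - j)) : ℕ) := by exact_mod_cast hcard
      _ = ((m : ℝ) + 1) ^ k * (q : ℝ) ^ ((m / r + (i + (n - j)) : ℕ) : ℝ) := by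
          rw [Real.rpow_natCast]
          push_cast [pow_add]
          ring
      _ ≤ ((n : ℝ) + 1) ^ k * (q : ℝ) ^ (f n * (1 - (r : ℝ)) / r + n) := by
          apply mul_le_mul
          · apply pow_le_pow_left₀ (by positivity)
            have : (m : ℝ) ≤ n := by exact_mod_cast hmn
            linarith
          · apply Real.rpow_le_rpow_of_exponent_le hq1.le
            have h1 : ((m / r : ℕ) : ℝ) ≤ (m : ℝ) / r := Nat.cast_div_le
            have h2 : ((i + (n - j) : ℕ) : ℝ) = (n : ℝ) - m := by
              have : i + (n - j) = n - m := by omega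
              rw [this]
              exact Nat.cast_sub hmn
            have hr0 : (0 : ℝ) < (r : ℝ) := by exact_mod_cast hrpos
            have h3 : (m : ℝ) / r - m = (m : ℝ) * ((1 - (r : ℝ)) / r) := by
              field_simp
            have h4 : (m : ℝ) * ((1 - (r : ℝ)) / r) ≤ f n * ((1 - (r : ℝ)) / r) := by
              apply mul_le_mul_of_nonpos_right hfm
              apply div_nonpos_of_nonpos_of_nonneg _ hr0.le
              have : (1 : ℝ) ≤ (r : ℝ) := by exact_mod_cast hrpos
              linarith
            push_cast
            rw [mul_div_assoc]
            calc ((m / r : ℕ) : ℝ) + ((i : ℝ) + ((n : ℕ) - (j : ℕ) : ℕ)) 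
                ≤ (m : ℝ) / r + ((n : ℝ) - m) := by
                  apply add_le_add h1
                  have : ((i : ℝ) + ((n : ℕ) - (j : ℕ) : ℕ)) = ((i + (n - j) : ℕ) : ℝ) := by
                    push_cast; ring
                  rw [this, h2]
              _ = (m : ℝ) * ((1 - (r : ℝ)) / r) + n := by rw [← h3]; ring
              _ ≤ f n * ((1 - (r : ℝ)) / r) + n := by linarith
          · exact Real.rpow_nonneg hq0.le _
          · positivity
      _ = ((n : ℝ) + 1) ^ k * e * (q : ℝ) ^ n := by
          rw [he, Real.rpow_add hq0, Real.rpow_natCast, mul_assoc]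
  -- put everything together
  have hPcard : P.card ≤ (n + 1) ^ 2 := by
    calc P.card ≤ ((Finset.range (n + 1)) ×ˢ (Finset.range (n + 1))).card :=
          Finset.card_filter_le _ _
      _ = (n + 1) ^ 2 := by simp [Finset.card_product, sq]
  have hmain : (Q.card : ℝ) ≤ ((n : ℝ) + 1) ^ (k + 2) * e * (q : ℝ) ^ n := by
    calc (Q.card : ℝ) ≤ ∑ p ∈ P, ((Finset.univ.filter
          (fun w : Fin n → σ => IsInstance V (subword (List.ofFn w) p.1 p.2))).card : ℝ) := by
          exact_mod_cast hQle
      _ ≤ ∑ _p ∈ P, ((n : ℝ) + 1) ^ k * e * (q : ℝ) ^ n := Finset.sum_le_sum hpair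
      _ = P.card * (((n : ℝ) + 1) ^ k * e * (q : ℝ) ^ n) := by
          rw [Finset.sum_const, nsmul_eq_mul]
      _ ≤ ((n : ℝ) + 1) ^ 2 * (((n : ℝ) + 1) ^ k * e * (q : ℝ) ^ n) := by
          apply mul_le_mul_of_nonneg_right _ (by positivity)
          exact_mod_cast hPcard
      _ = ((n : ℝ) + 1) ^ (k + 2) * e * (q : ℝ) ^ n := by ring
  have hnk : ((n : ℝ) + 1) ^ (k + 2) < (n : ℝ) ^ (k + 3) := by
    have hnat : (n + 1) ^ (k + 2) < n ^ (k + 3) := by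
      calc (n + 1) ^ (k + 2) ≤ (2 * n) ^ (k + 2) :=
            Nat.pow_le_pow_left (by omega) _
        _ = 2 ^ (k + 2) * n ^ (k + 2) := by rw [Nat.mul_pow]
        _ < n * n ^ (k + 2) := by
            apply Nat.mul_lt_mul_right (Nat.pow_pos (by omega)) |>.mpr hn2
        _ = n ^ (k + 3) := by ring
    exact_mod_cast hnat
  rw [hNatQ]
  calc (Q.card : ℝ) / (q : ℝ) ^ n ≤ ((n : ℝ) + 1) ^ (k + 2) * e := by
        rw [div_le_iff₀ hqn]
        exact hmain
    _ < (n : ℝ) ^ (k + 3) * e := by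
        exact mul_lt_mul_of_pos_right hnk hrpow
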